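/- If F ⊆ ℝ^d is a nonempty bounded set with upper box dimension 0, then its quasi-Assouad dimension is also 0. -/

import Mathlib

open Filter MeasureTheory
open scoped Topology ENNReal

/-- `coverN E r` is the smallest number of sets of diameter at most `r` needed to cover `E`. -/
noncomputable def coverN {X : Type*} [PseudoMetricSpace X] (E : Set X) (r : ℝ) : ℕ :=
  sInf {n : ℕ | ∃ s : Finset (Set X),
    s.card = n ∧ (∀ U ∈ s, Metric.diam U ≤ r) ∧ E ⊆ ⋃ U ∈ s, U}

/-- The upper box dimension of a set. -/
noncomputable def upperBoxDim {X : Type*} [PseudoMetricSpace X] (F : Set X) : ℝ :=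
  Filter.limsup (fun r : ℝ => Real.log (coverN F r : ℝ) / (-Real.log r))
    (nhdsWithin (0 : ℝ) (Set.Ioi 0))

/-- `quasiAssouadFunc F δ` is the function `h_F(δ)` whose limit as `δ → 0⁺` defines the
quasi-Assouad dimension of `F`. -/
noncomputable def quasiAssouadFunc {X : Type*} [PseudoMetricSpace X] (F : Set X) (δ : ℝ) : ℝ :=
  sInf {α : ℝ | 0 ≤ α ∧ ∃ C : ℝ, 0 < C ∧ ∀ x ∈ F, ∀ r R : ℝ, 0 < r → 0 < R →
    r ≤ R ^ (1 + δ) → R ^ (1 + δ) < 1 →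
    (coverN (Metric.closedBall x R ∩ F) r : ℝ) ≤ C * (R / r) ^ α}

def covSet {X : Type*} [PseudoMetricSpace X] (E : Set X) (r : ℝ) : Set ℕ :=
  {n : ℕ | ∃ s : Finset (Set X),
    s.card = n ∧ (∀ U ∈ s, Metric.diam U ≤ r) ∧ E ⊆ ⋃ U ∈ s, U}

lemma coverN_eq {X : Type*} [PseudoMetricSpace X] (E : Set X) (r : ℝ) :
    coverN E r = sInf (covSet E r) := rfl

lemma mem_covSet_trans {X : Type*} [PseudoMetricSpace X] {E E' : Set X} (h : E ⊆ E')
    {r r' : ℝ} (hrr : r' ≤ r) {n : ℕ} (hn : n ∈ covSet E' r') : n ∈ covSet E r := by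
  obtain ⟨s, hcard, hdiam, hcov⟩ := hn
  exact ⟨s, hcard, fun U hU => (hdiam U hU).trans hrr, h.trans hcov⟩

lemma coverN_le {X : Type*} [PseudoMetricSpace X] {E E' : Set X} (h : E ⊆ E')
    {r r' : ℝ} (hrr : r' ≤ r) (hne : (covSet E' r').Nonempty) :
    coverN E r ≤ coverN E' r' := by
  rw [coverN_eq, coverN_eq]
  exact Nat.sInf_le (mem_covSet_trans h hrr (Nat.sInf_mem hne))

lemma one_le_coverN {X : Type*} [PseudoMetricSpace X] {E : Set X} (hE : E.Nonempty)
    {r : ℝ} (hne : (covSet E r).Nonempty) : 1 ≤ coverN E r := by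
  rw [coverN_eq]
  have hmem := Nat.sInf_mem hne
  obtain ⟨s, hcard, -, hcov⟩ := hmem
  rcases Nat.eq_zero_or_pos (sInf (covSet E r)) with h0 | h1
  · exfalso
    rw [h0] at hcard
    rw [Finset.card_eq_zero] at hcard
    subst hcard
    obtain ⟨x, hx⟩ := hE
    simpa using hcov hx
  · exact h1

lemma grid_cover {d : ℕ} {F : Set (EuclideanSpace ℝ (Fin d))} {K : ℝ} (hK : 0 ≤ K)
    (hF : F ⊆ Metric.closedBall 0 K) {r : ℝ} (hr : 0 < r) (hr1 : r ≤ 1) :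
    ∃ s : Finset (Set (EuclideanSpace ℝ (Fin d))),
      (∀ U ∈ s, Metric.diam U ≤ r) ∧ (F ⊆ ⋃ U ∈ s, U) ∧
      (s.card : ℝ) ≤ ((4*(d+1)*(K+1)+3)/r)^d := by
  classical
  have hd0 : (0:ℝ) ≤ d := Nat.cast_nonneg d
  set step : ℝ := r / (2*(d+1)) with hstep
  have hstep0 : 0 < step := by positivity
  have hstephalf : step ≤ 1/2 := by
    rw [hstep, div_le_div_iff₀ (by positivity) (by norm_num)]
    nlinarith
  set m : ℕ := ⌈(K+1)/step⌉₊ with hm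
  set ctr : (Fin d → ℤ) → EuclideanSpace ℝ (Fin d) :=
    fun c => WithLp.toLp 2 (fun j => step * c j : Fin d → ℝ) with hctr
  set T : Finset (Fin d → ℤ) := Fintype.piFinset (fun _ => Finset.Icc (-(m:ℤ)) m) with hT
  refine ⟨T.image (fun c => Metric.closedBall (ctr c) (r/4)), ?_, ?_, ?_⟩
  · intro U hU
    simp only [Finset.mem_image] at hU
    obtain ⟨c, -, rfl⟩ := hU
    calc Metric.diam (Metric.closedBall (ctr c) (r/4)) ≤ 2 * (r/4) :=
          Metric.diam_closedBall (by positivity)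
    _ ≤ r := by linarith
  · intro x hx
    have hxK := hF hx
    rw [Metric.mem_closedBall, dist_zero_right] at hxK
    have hcoord : ∀ j, |x j| ≤ K := by
      intro j
      have h1 : ‖x j‖ ≤ ‖x‖ := by
        rw [EuclideanSpace.norm_eq]
        have h2 : ‖x j‖^2 ≤ ∑ i, ‖x i‖^2 :=
          Finset.single_le_sum (f := fun i => ‖x i‖^2) (fun i _ => by positivity)
            (Finset.mem_univ j)
        calc ‖x j‖ = √(‖x j‖^2) := (Real.sqrt_sq (norm_nonneg _)).symm
        _ ≤ _ := Real.sqrt_le_sqrt h2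
      simpa using h1.trans hxK
    set c : Fin d → ℤ := fun j => round (x j / step) with hc
    have hround : ∀ j, |x j / step - c j| ≤ 1/2 := fun j => abs_sub_round _
    have hcm : c ∈ T := by
      simp only [hT, Fintype.mem_piFinset, Finset.mem_Icc]
      intro j
      have htm : (K+1)/step ≤ (m:ℝ) := Nat.le_ceil _
      have h12 : (2:ℝ) ≤ 1/step := by
        rw [le_div_iff₀ hstep0]; linarith
      have habs : |x j / step| ≤ K/step := by
        rw [abs_div, abs_of_pos hstep0]; gcongr; exact hcoord j
      have hub := (abs_le.1 (hround j)).2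
      have hlb := (abs_le.1 (hround j)).1
      have habs' := abs_le.1 habs
      have hK1 : K/step + 1/2 ≤ (K+1)/step := by
        rw [add_div]; linarith
      constructor
      · have : -(m:ℝ) ≤ (c j : ℝ) := by
          have := habs'.1; linarith
        exact_mod_cast this
      · have : ((c j : ℤ) : ℝ) ≤ m := by
          have := habs'.2; linarith
        exact_mod_cast this
    have hdist : dist x (ctr c) ≤ r/4 := by
      have hj : ∀ j, dist (x j) (ctr c j) ≤ step/2 := by
        intro j
        rw [Real.dist_eq]
        have hne : step ≠ 0 := ne_of_gt hstep0
        have he : x j - ctr c j = step * (x j / step - c j) := by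
          show x j - step * c j = _
          field_simp
        rw [he, abs_mul, abs_of_pos hstep0]
        calc step * |x j / step - (c j : ℝ)| ≤ step * (1/2) :=
              mul_le_mul_of_nonneg_left (hround j) hstep0.le
        _ = step / 2 := by ring
      rw [EuclideanSpace.dist_eq]
      have hsum : ∑ j, dist (x j) (ctr c j)^2 ≤ d * (step/2)^2 := by
        calc ∑ j, dist (x j) (ctr c j)^2 ≤ ∑ _j : Fin d, (step/2)^2 :=
              Finset.sum_le_sum (fun j _ => by
                have := hj j
                nlinarith [dist_nonneg (x := x j) (y := ctr c j)])
        _ = d * (step/2)^2 := by simp [mul_comm]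
      have h2 : (d:ℝ) * (step/2)^2 ≤ (r/4)^2 := by
        have hdne : (d:ℝ)+1 ≠ 0 := by positivity
        have e : step/2 = r/(4*((d:ℝ)+1)) := by rw [hstep, div_div]; congr 1; ring
        rw [e, div_pow, div_pow, ← mul_div_assoc, div_le_div_iff₀ (by positivity) (by positivity)]
        nlinarith [sq_nonneg r, sq_nonneg ((d:ℝ)+1), sq_nonneg (r*(d:ℝ))]
      calc √(∑ j, dist (x j) (ctr c j)^2) ≤ √((r/4)^2) :=
            Real.sqrt_le_sqrt (hsum.trans h2)
      _ = r/4 := Real.sqrt_sq (by positivity)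
    exact Set.mem_biUnion (Finset.mem_image_of_mem _ hcm) (Metric.mem_closedBall.2 hdist)
  · have hTcard : T.card = (2*m+1)^d := by
      rw [hT, Fintype.card_piFinset]
      have h1 : (Finset.Icc (-(m:ℤ)) (m:ℤ)).card = 2*m+1 := by
        rw [Int.card_Icc]; omega
      simp [h1]
    have hmr : (m:ℝ) < (K+1)*(2*((d:ℝ)+1))/r + 1 := by
      have h : (m:ℝ) < (K+1)/step + 1 := Nat.ceil_lt_add_one (by positivity)
      have e2 : (K+1)/step = (K+1)*(2*((d:ℝ)+1))/r := by
        rw [hstep, div_div_eq_mul_div]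
      rwa [e2] at h
    have hfinal : ((2*m+1:ℕ):ℝ) ≤ (4*(d+1)*(K+1)+3)/r := by
      push_cast
      have h3 : (3:ℝ) ≤ 3/r := by rw [le_div_iff₀ hr]; nlinarith
      rw [add_div]
      have h4 : 4*((d:ℝ)+1)*(K+1)/r = ((K+1)*(2*((d:ℝ)+1))/r) * 2 := by ring
      rw [h4]
      linarith
    calc ((T.image (fun c => Metric.closedBall (ctr c) (r/4))).card : ℝ)
        ≤ (T.card : ℝ) := by exact_mod_cast Finset.card_image_le
    _ = ((2*m+1:ℕ):ℝ)^d := by rw [hTcard]; push_cast; ring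
    _ ≤ ((4*(d+1)*(K+1)+3)/r)^d := pow_le_pow_left₀ (by positivity) hfinal d

/-- If `F ⊆ ℝ^d` is a nonempty bounded set with upper box dimension `0`, then its
quasi-Assouad dimension (the limit of `h_F(δ)` as `δ → 0⁺`) is also `0`. -/
theorem quasiAssouad_eq_zero_of_upperBoxDim_eq_zero (d : ℕ)
    (F : Set (EuclideanSpace ℝ (Fin d))) (hne : F.Nonempty) (hbd : Bornology.IsBounded F)
    (h : upperBoxDim F = 0) :
    Filter.Tendsto (fun δ : ℝ => quasiAssouadFunc F δ)
      (nhdsWithin (0 : ℝ) (Set.Ioi 0)) (nhds (0 : ℝ)) := by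
  obtain ⟨K0, hK0⟩ := hbd.subset_closedBall 0
  set K : ℝ := max K0 0 with hKdef
  have hK : 0 ≤ K := le_max_right _ _
  have hF : F ⊆ Metric.closedBall 0 K :=
    hK0.trans (Metric.closedBall_subset_closedBall (le_max_left _ _))
  set f : ℝ → ℝ := fun r => Real.log (coverN F r : ℝ) / (-Real.log r) with hfdef
  set B : ℝ := 4*(d+1)*(K+1)+3 with hBdef
  have hB1 : (1:ℝ) ≤ B := by
    have hd0 : (0:ℝ) ≤ d := Nat.cast_nonneg d
    rw [hBdef]; nlinarith
  -- covers exist at every positive scale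
  have hgrid : ∀ r : ℝ, 0 < r → r ≤ 1 → ∃ n ∈ covSet F r, (n:ℝ) ≤ (B/r)^d := by
    intro r hr hr1
    obtain ⟨s, hdiam, hcov, hcard⟩ := grid_cover hK hF hr hr1
    exact ⟨s.card, ⟨s, rfl, hdiam, hcov⟩, hcard⟩
  have hcovne : ∀ r : ℝ, 0 < r → (covSet F r).Nonempty := by
    intro r hr
    obtain ⟨n, hn, -⟩ := hgrid (min r 1) (by positivity) (min_le_right _ _)
    exact ⟨n, mem_covSet_trans (subset_refl F) (min_le_left _ _) hn⟩
  have hone : ∀ r : ℝ, 0 < r → (1:ℝ) ≤ (coverN F r : ℝ) := by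
    intro r hr
    exact_mod_cast one_le_coverN hne (hcovne r hr)
  have hNbound : ∀ r : ℝ, 0 < r → r ≤ 1 → (coverN F r : ℝ) ≤ (B/r)^d := by
    intro r hr hr1
    obtain ⟨n, hn, hle⟩ := hgrid r hr hr1
    have : coverN F r ≤ n := by rw [coverN_eq]; exact Nat.sInf_le hn
    calc (coverN F r : ℝ) ≤ (n:ℝ) := by exact_mod_cast this
    _ ≤ _ := hle
  -- f is eventually bounded above
  have hbound : IsBoundedUnder (· ≤ ·) (𝓝[>] (0:ℝ)) f := by
    refine ⟨(d:ℝ) * Real.log B / Real.log 2 + d, eventually_map.2 ?_⟩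
    filter_upwards [Ioo_mem_nhdsGT (by norm_num : (0:ℝ) < 1/2)] with r hr
    obtain ⟨hr0, hr2⟩ := hr
    have hr1 : r < 1 := by linarith
    have hlogr : Real.log r < 0 := Real.log_neg hr0 hr1
    have hlog2 : Real.log 2 ≤ -Real.log r := by
      have h1 : Real.log r ≤ Real.log (1/2) := by
        rw [Real.log_le_log_iff hr0 (by norm_num)]
        linarith
      rw [Real.log_div (by norm_num) (by norm_num), Real.log_one] at h1
      linarith
    have hlogB : 0 ≤ Real.log B := Real.log_nonneg hB1
    have hN := hNbound r hr0 hr1.le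
    have hNlog : Real.log (coverN F r : ℝ) ≤ (d:ℝ) * (Real.log B - Real.log r) := by
      calc Real.log (coverN F r : ℝ) ≤ Real.log ((B/r)^d) := by
            apply Real.log_le_log (by linarith [hone r hr0]) hN
      _ = (d:ℝ) * Real.log (B/r) := by rw [Real.log_pow]
      _ = (d:ℝ) * (Real.log B - Real.log r) := by
            rw [Real.log_div (by linarith) (ne_of_gt hr0)]
    have hlogN0 : 0 ≤ Real.log (coverN F r : ℝ) := Real.log_nonneg (hone r hr0)
    show Real.log (coverN F r : ℝ) / (-Real.log r) ≤ (d:ℝ) * Real.log B / Real.log 2 + d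
    rw [div_add' _ _ _ (ne_of_gt (Real.log_pos (by norm_num)))]
    rw [div_le_div_iff₀ (by linarith) (Real.log_pos (by norm_num))]
    have hd0 : (0:ℝ) ≤ d := Nat.cast_nonneg d
    have hlog2pos : (0:ℝ) < Real.log 2 := Real.log_pos (by norm_num)
    nlinarith [mul_le_mul_of_nonneg_right hNlog hlog2pos.le,
      mul_le_mul_of_nonneg_left hlog2 (mul_nonneg hd0 hlogB)]
  -- the key membership claim
  have key : ∀ δ : ℝ, 0 < δ → ∀ α : ℝ, 0 < α →
      α ∈ {α : ℝ | 0 ≤ α ∧ ∃ C : ℝ, 0 < C ∧ ∀ x ∈ F, ∀ r R : ℝ, 0 < r → 0 < R →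
        r ≤ R ^ (1 + δ) → R ^ (1 + δ) < 1 →
        (coverN (Metric.closedBall x R ∩ F) r : ℝ) ≤ C * (R / r) ^ α} := by
    intro δ hδ α hα
    set ε : ℝ := α * δ / (1 + δ) with hεdef
    have hε : 0 < ε := by positivity
    have hlimsup : Filter.limsup f (𝓝[>] (0:ℝ)) < ε := by
      have : Filter.limsup f (𝓝[>] (0:ℝ)) = upperBoxDim F := rfl
      rw [this, h]; exact hε
    have hev : ∀ᶠ r in 𝓝[>] (0:ℝ), f r < ε :=
      eventually_lt_of_limsup_lt hlimsup hbound
    obtain ⟨u, hu, hsub⟩ := mem_nhdsGT_iff_exists_Ioo_subset.1 hev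
    rw [Set.mem_Ioi] at hu
    set r0 : ℝ := min u 1 / 2 with hr0def
    have hr00 : 0 < r0 := by
      rw [hr0def]; have := lt_min hu one_pos; positivity
    have hr0u : r0 < u := by
      rw [hr0def]
      calc min u 1 / 2 < min u 1 := by
            have := lt_min hu one_pos; linarith
      _ ≤ u := min_le_left _ _
    set M : ℝ := (coverN F r0 : ℝ) with hMdef
    set C : ℝ := max M 1 with hCdef
    have hC1 : (1:ℝ) ≤ C := le_max_right _ _
    refine ⟨hα.le, C, by linarith, ?_⟩
    intro x hx r R hr hR hrR hR1
    have hRlt1 : R < 1 := by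
      by_contra hcon
      push_neg at hcon
      have h1 : (1:ℝ) ≤ R ^ (1+δ) := by
        calc (1:ℝ) = 1 ^ (1+δ) := (Real.one_rpow _).symm
        _ ≤ R ^ (1+δ) := Real.rpow_le_rpow (by norm_num) hcon (by linarith)
      linarith
    have hrR' : r ≤ R := by
      calc r ≤ R ^ (1+δ) := hrR
      _ ≤ R ^ (1:ℝ) := Real.rpow_le_rpow_of_exponent_ge hR hRlt1.le (by linarith)
      _ = R := Real.rpow_one R
    have hr1 : r < 1 := lt_of_le_of_lt hrR hR1
    have hcover1 : coverN (Metric.closedBall x R ∩ F) r ≤ coverN F r :=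
      coverN_le Set.inter_subset_right (le_refl r) (hcovne r hr)
    rcases le_or_gt r r0 with hcase | hcase
    · -- small scales: use the box dimension bound
      have hru : r < u := lt_of_le_of_lt hcase hr0u
      have hrff : f r < ε := hsub ⟨hr, hru⟩
      have hlogr : Real.log r < 0 := Real.log_neg hr hr1
      have hlog : Real.log (coverN F r : ℝ) < ε * (-Real.log r) := by
        have h2 := hrff
        rw [hfdef] at h2
        simp only at h2
        rwa [div_lt_iff₀ (by linarith)] at h2
      have hNle : (coverN F r : ℝ) ≤ r ^ (-ε) := by
        have h1 : (coverN F r : ℝ) = Real.exp (Real.log (coverN F r : ℝ)) :=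
          (Real.exp_log (by linarith [hone r hr])).symm
        rw [h1, Real.rpow_def_of_pos hr]
        apply Real.exp_le_exp.2
        have he : Real.log r * (-ε) = ε * (-Real.log r) := by ring
        rw [he]
        exact hlog.le
      have hrpow : r ^ (-ε) ≤ (R/r)^α := by
        have hδ0 : (0:ℝ) < 1 + δ := by linarith
        have h1 : r ^ ((1:ℝ)/(1+δ)) ≤ R := by
          have h2 := Real.rpow_le_rpow hr.le hrR (by positivity : (0:ℝ) ≤ 1/(1+δ))
          have e1 : ((1:ℝ)+δ) * (1/(1+δ)) = 1 := by field_simp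
          rwa [← Real.rpow_mul hR.le, e1, Real.rpow_one] at h2
        have h2 : r ^ ((1:ℝ)/(1+δ) - 1) ≤ R / r := by
          rw [Real.rpow_sub hr, Real.rpow_one]
          gcongr
        have h3 : (r ^ ((1:ℝ)/(1+δ)-1)) ^ α ≤ (R/r)^α :=
          Real.rpow_le_rpow (Real.rpow_nonneg hr.le _) h2 hα.le
        rw [← Real.rpow_mul hr.le] at h3
        have e2 : ((1:ℝ)/(1+δ)-1)*α = -ε := by
          have hne : (1:ℝ)+δ ≠ 0 := ne_of_gt hδ0
          have e3 : (1:ℝ)/(1+δ)*(1+δ) = 1 := by field_simp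
          rw [hεdef, ← neg_div, eq_div_iff hne]
          calc ((1:ℝ)/(1+δ)-1)*α*(1+δ) = ((1:ℝ)/(1+δ)*(1+δ))*α - α*(1+δ) := by ring
          _ = α - α*(1+δ) := by rw [e3]; ring
          _ = -(α*δ) := by ring
        rwa [e2] at h3
      calc (coverN (Metric.closedBall x R ∩ F) r : ℝ) ≤ (coverN F r : ℝ) := by
            exact_mod_cast hcover1
      _ ≤ r^(-ε) := hNle
      _ ≤ (R/r)^α := hrpow
      _ ≤ C * (R/r)^α :=
            le_mul_of_one_le_left (Real.rpow_nonneg (div_nonneg hR.le hr.le) α) hC1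
    · -- large scales: use monotonicity
      have h2 : coverN F r ≤ coverN F r0 :=
        coverN_le (subset_refl F) hcase.le (hcovne r0 hr00)
      have hRr1 : (1:ℝ) ≤ R/r := (one_le_div hr).2 hrR'
      have hpow1 : (1:ℝ) ≤ (R/r)^α := Real.one_le_rpow hRr1 hα.le
      calc (coverN (Metric.closedBall x R ∩ F) r : ℝ) ≤ (coverN F r0 : ℝ) := by
            exact_mod_cast hcover1.trans h2
      _ ≤ C := le_max_left M 1
      _ ≤ C * (R/r)^α := le_mul_of_one_le_right (by linarith) hpow1
  -- conclude
  have hqa : ∀ δ : ℝ, 0 < δ → quasiAssouadFunc F δ = 0 := by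
    intro δ hδ
    apply le_antisymm
    · refine le_of_forall_pos_le_add fun ε hε => ?_
      have h1 : quasiAssouadFunc F δ ≤ ε :=
        csInf_le ⟨0, fun a ha => ha.1⟩ (key δ hδ ε hε)
      linarith
    · exact le_csInf ⟨1, key δ hδ 1 one_pos⟩ fun a ha => ha.1
  have heq : (fun δ : ℝ => quasiAssouadFunc F δ) =ᶠ[𝓝[>] (0:ℝ)] (fun _ => (0:ℝ)) := by
    filter_upwards [self_mem_nhdsWithin] with δ hδ
    exact hqa δ hδ
  exact (tendsto_congr' heq).2 tendsto_const_nhds
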